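/- Let 0 → Ĉ → ĝ → g → 0 be a universal central extension of a centerless Lie algebra g. Then every derivation of g lifts uniquely to a derivation of ĝ, and the resulting map Der(g) → Der(ĝ) is an isomorphism of Lie algebras. -/

import Mathlib

universe u

section Aux

variable {F : Type u} [Field F]
  {g ghat : Type u} [LieRing g] [LieAlgebra F g] [LieRing ghat] [LieAlgebra F ghat]
  (q : ghat →ₗ⁅F⁆ g)

/-- The pullback algebra used to lift derivations: pairs `(x, y)` with `q y = D (q x)`. -/
def stmt17P (D : LieDerivation F g g) : Submodule F (ghat × ghat) where
  carrier := {p | q p.2 = D (q p.1)}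
  add_mem' := by
    intro a b ha hb
    simp only [Set.mem_setOf_eq, Prod.snd_add, Prod.fst_add] at *
    rw [map_add, map_add, map_add, ha, hb]
  zero_mem' := by simp
  smul_mem' := by
    intro t a ha
    simp only [Set.mem_setOf_eq, Prod.smul_snd, Prod.smul_fst] at *
    rw [map_smul, map_smul, map_smul, ha]

lemma stmt17P_mem {D : LieDerivation F g g} {p : ghat × ghat} :
    p ∈ stmt17P q D ↔ q p.2 = D (q p.1) := Iff.rfl

variable (D : LieDerivation F g g)

instance : LieRing ↥(stmt17P q D) where
  bracket a b := ⟨(⁅a.1.1, b.1.1⁆, ⁅a.1.1, b.1.2⁆ + ⁅a.1.2, b.1.1⁆), by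
    rw [stmt17P_mem]
    have ha := (stmt17P_mem q).mp a.2
    have hb := (stmt17P_mem q).mp b.2
    simp only [map_add, LieHom.map_lie, ha, hb,
      D.apply_lie_eq_add (q a.1.1) (q b.1.1)]⟩
  add_lie a b c := by
    refine Subtype.ext (Prod.ext_iff.mpr ⟨?_, ?_⟩) <;>
      simp only [Submodule.coe_add, Prod.fst_add, Prod.snd_add, add_lie] <;> abel
  lie_add a b c := by
    refine Subtype.ext (Prod.ext_iff.mpr ⟨?_, ?_⟩) <;>
      simp only [Submodule.coe_add, Prod.fst_add, Prod.snd_add, lie_add] <;> abel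
  lie_self a := by
    refine Subtype.ext (Prod.ext_iff.mpr ⟨?_, ?_⟩)
    · show ⁅a.1.1, a.1.1⁆ = ((0 : ↥(stmt17P q D)) : ghat × ghat).1
      rw [lie_self]; rfl
    · show ⁅a.1.1, a.1.2⁆ + ⁅a.1.2, a.1.1⁆ = ((0 : ↥(stmt17P q D)) : ghat × ghat).2
      rw [← lie_skew a.1.2 a.1.1, add_neg_cancel]; rfl
  leibniz_lie a b c := by
    refine Subtype.ext (Prod.ext_iff.mpr ⟨?_, ?_⟩)
    · have h : (⁅a.1.1, ⁅b.1.1, c.1.1⁆⁆ : ghat)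
        = ⁅⁅a.1.1, b.1.1⁆, c.1.1⁆ + ⁅b.1.1, ⁅a.1.1, c.1.1⁆⁆ := leibniz_lie _ _ _
      exact h
    · show ⁅a.1.1, ⁅b.1.1, c.1.2⁆ + ⁅b.1.2, c.1.1⁆⁆ + ⁅a.1.2, ⁅b.1.1, c.1.1⁆⁆
        = (⁅⁅a.1.1, b.1.1⁆, c.1.2⁆ + ⁅⁅a.1.1, b.1.2⁆ + ⁅a.1.2, b.1.1⁆, c.1.1⁆)
          + (⁅b.1.1, ⁅a.1.1, c.1.2⁆ + ⁅a.1.2, c.1.1⁆⁆ + ⁅b.1.2, ⁅a.1.1, c.1.1⁆⁆)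
      rw [lie_add a.1.1, add_lie ⁅a.1.1, b.1.2⁆, lie_add b.1.1,
        leibniz_lie a.1.1 b.1.1 c.1.2, leibniz_lie a.1.1 b.1.2 c.1.1,
        leibniz_lie a.1.2 b.1.1 c.1.1]
      abel


instance : LieAlgebra F ↥(stmt17P q D) where
  lie_smul t a b := by
    refine Subtype.ext (Prod.ext_iff.mpr ⟨?_, ?_⟩)
    · show ⁅a.1.1, (t • b).1.1⁆ = t • ⁅a.1.1, b.1.1⁆
      exact lie_smul t a.1.1 b.1.1
    · show ⁅a.1.1, (t • b).1.2⁆ + ⁅a.1.2, (t • b).1.1⁆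
        = t • (⁅a.1.1, b.1.2⁆ + ⁅a.1.2, b.1.1⁆)
      show ⁅a.1.1, t • b.1.2⁆ + ⁅a.1.2, t • b.1.1⁆ = _
      rw [lie_smul, lie_smul, smul_add]

/-- The projection from the pullback algebra to `g`. -/
def stmt17Pi : ↥(stmt17P q D) →ₗ⁅F⁆ g where
  toFun p := q p.1.1
  map_add' a b := by simp
  map_smul' t a := by simp
  map_lie' {a b} := by
    show q ⁅a.1.1, b.1.1⁆ = _
    simp

/-- First projection from the pullback algebra to `ghat`, a Lie homomorphism. -/
def stmt17Pr1 : ↥(stmt17P q D) →ₗ⁅F⁆ ghat where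
  toFun p := p.1.1
  map_add' a b := rfl
  map_smul' t a := rfl
  map_lie' {a b} := rfl

end Aux

/-- Let `0 → Ĉ → ĝ → g → 0` be a universal central extension of a centerless Lie algebra
`g`.  Then every derivation of `g` lifts uniquely to a derivation of `ĝ`, and the
resulting map `Der(g) → Der(ĝ)` is an isomorphism of Lie algebras. -/
theorem stmt17 (F : Type u) [Field F]
    (g ghat : Type u) [LieRing g] [LieAlgebra F g] [LieRing ghat] [LieAlgebra F ghat]
    -- `g` is centerless
    (hcenterg : LieAlgebra.center F g = ⊥)
    -- `q : ĝ → g` is a central extension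
    (q : ghat →ₗ⁅F⁆ g) (hqsurj : Function.Surjective q)
    (hqcent : q.ker ≤ LieAlgebra.center F ghat)
    -- ... which is universal
    (huniv : ∀ (E : Type u) [LieRing E] [LieAlgebra F E] (π : E →ₗ⁅F⁆ g),
      Function.Surjective π → π.ker ≤ LieAlgebra.center F E →
        ∃! ψ : ghat →ₗ⁅F⁆ E, π.comp ψ = q) :
    (∀ D : LieDerivation F g g, ∃! Dhat : LieDerivation F ghat ghat,
        ∀ x : ghat, q (Dhat x) = D (q x)) ∧
      ∃ Φ : LieDerivation F g g ≃ₗ⁅F⁆ LieDerivation F ghat ghat,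
        ∀ (D : LieDerivation F g g) (x : ghat), q ((Φ D) x) = D (q x) := by
  classical
  -- elements of the kernel of q are central
  have hker_cent : ∀ z : ghat, q z = 0 → ∀ w : ghat, ⁅w, z⁆ = 0 := by
    intro z hz w
    have := hqcent (LieHom.mem_ker.mpr hz)
    exact (LieModule.mem_maxTrivSubmodule F ghat ghat z).mp this w
  -- Part 1: existence and uniqueness of lifts
  have hpart1 : ∀ D : LieDerivation F g g, ∃! Dhat : LieDerivation F ghat ghat,
      ∀ x : ghat, q (Dhat x) = D (q x) := by
    intro D
    -- the projection is surjective with central kernel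
    have hsurj : Function.Surjective (stmt17Pi q D) := by
      intro u
      obtain ⟨x, hx⟩ := hqsurj u
      obtain ⟨y, hy⟩ := hqsurj (D u)
      exact ⟨⟨(x, y), by rw [stmt17P_mem, hx, hy]⟩, hx⟩
    have hcent : (stmt17Pi q D).ker ≤ LieAlgebra.center F ↥(stmt17P q D) := by
      intro a ha
      rw [LieHom.mem_ker] at ha
      have h1 : q a.1.1 = 0 := ha
      have h2 : q a.1.2 = 0 := by rw [(stmt17P_mem q).mp a.2, h1, map_zero]
      rw [LieModule.mem_maxTrivSubmodule]
      intro b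
      apply Subtype.ext; apply Prod.ext
      · show ⁅b.1.1, a.1.1⁆ = (0 : ghat × ghat).1
        simp [hker_cent _ h1]
      · show ⁅b.1.1, a.1.2⁆ + ⁅b.1.2, a.1.1⁆ = (0 : ghat × ghat).2
        simp [hker_cent _ h1, hker_cent _ h2]
    obtain ⟨ψ, hψ, hψuniq⟩ := huniv (↥(stmt17P q D)) (stmt17Pi q D) hsurj hcent
    -- the first component of ψ is the identity
    obtain ⟨ψ₀, hψ₀, hψ₀uniq⟩ := huniv ghat q hqsurj hqcent
    have hid : (stmt17Pr1 q D).comp ψ = LieHom.id := by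
      have h1 : q.comp ((stmt17Pr1 q D).comp ψ) = q := by
        ext z
        exact congrFun (congrArg DFunLike.coe hψ) z
      have h2 : q.comp LieHom.id = q := by ext z; rfl
      rw [hψ₀uniq _ h1, hψ₀uniq _ h2]
    have hfst : ∀ z : ghat, (ψ z).1.1 = z := fun z =>
      congrFun (congrArg DFunLike.coe hid) z
    -- the second component of ψ gives the lift
    refine ⟨⟨{ toFun := fun z => (ψ z).1.2
               map_add' := fun a b => by
                 show (ψ (a + b)).1.2 = (ψ a).1.2 + (ψ b).1.2
                 rw [map_add]; rfl
               map_smul' := fun t a => by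
                 show (ψ (t • a)).1.2 = t • (ψ a).1.2
                 rw [map_smul]; rfl },
             fun a b => by
               show (ψ ⁅a, b⁆).1.2 = ⁅a, (ψ b).1.2⁆ - ⁅b, (ψ a).1.2⁆
               rw [LieHom.map_lie]
               show ⁅(ψ a).1.1, (ψ b).1.2⁆ + ⁅(ψ a).1.2, (ψ b).1.1⁆ = _
               rw [hfst, hfst, ← lie_skew b (ψ a).1.2]
               abel⟩, ?_, ?_⟩
    · intro x
      show q (ψ x).1.2 = D (q x)
      rw [(stmt17P_mem q).mp (ψ x).2, hfst]
    · -- uniqueness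
      intro E hE
      -- build a competing map into the pullback from E
      set ψ' : ghat →ₗ⁅F⁆ ↥(stmt17P q D) :=
        { toFun := fun z => ⟨(z, E z), by rw [stmt17P_mem]; exact hE z⟩
          map_add' := fun a b => by apply Subtype.ext; simp
          map_smul' := fun t a => by apply Subtype.ext; simp
          map_lie' := fun {a b} => by
            refine Subtype.ext (Prod.ext_iff.mpr ⟨rfl, ?_⟩)
            show E ⁅a, b⁆ = ⁅a, E b⁆ + ⁅E a, b⁆
            rw [E.apply_lie_eq_add]
            try abel } with hψ'def
      have hψ'q : (stmt17Pi q D).comp ψ' = q := by ext z; rfl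
      have heq : ψ' = ψ := hψuniq ψ' hψ'q
      ext z
      show E z = (ψ z).1.2
      rw [← heq]
      rfl
  refine ⟨hpart1, ?_⟩
  -- Part 2: the lifting map is a Lie algebra isomorphism
  set Lift : LieDerivation F g g → LieDerivation F ghat ghat :=
    fun D => (hpart1 D).choose with hLiftdef
  have hlift : ∀ D (x : ghat), q (Lift D x) = D (q x) := fun D => (hpart1 D).choose_spec.1
  have huniq : ∀ (D : LieDerivation F g g) (E : LieDerivation F ghat ghat),
      (∀ x, q (E x) = D (q x)) → E = Lift D := fun D => (hpart1 D).choose_spec.2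
  set Φ₀ : LieDerivation F g g →ₗ⁅F⁆ LieDerivation F ghat ghat :=
    { toFun := Lift
      map_add' := fun D D' => by
        refine (huniq (D + D') (Lift D + Lift D') fun x => ?_).symm
        simp [hlift]
      map_smul' := fun t D => by
        refine (huniq (t • D) (t • Lift D) fun x => ?_).symm
        simp [hlift]
      map_lie' := fun {D D'} => by
        refine (huniq ⁅D, D'⁆ ⁅Lift D, Lift D'⁆ fun x => ?_).symm
        rw [LieDerivation.commutator_apply, LieDerivation.commutator_apply,
          map_sub q, hlift, hlift, hlift, hlift] } with hΦ₀def
  have hinj : Function.Injective Φ₀ := by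
    intro D D' h
    ext u
    obtain ⟨x, rfl⟩ := hqsurj u
    rw [← hlift D x, ← hlift D' x]
    show q (Φ₀ D x) = q (Φ₀ D' x)
    rw [h]
  have hsurj : Function.Surjective Φ₀ := by
    intro E
    -- E maps ker q into ker q
    have hEker : ∀ z : ghat, q z = 0 → q (E z) = 0 := by
      intro z hz
      -- E z is central
      have hEz : ∀ w : ghat, ⁅w, E z⁆ = 0 := by
        intro w
        have h1 : E ⁅w, z⁆ = ⁅w, E z⁆ - ⁅z, E w⁆ := E.apply_lie_eq_sub w z
        rw [hker_cent _ hz w] at h1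
        rw [show E (0 : ghat) = 0 from map_zero E.toLinearMap] at h1
        have h2 : ⁅z, E w⁆ = 0 := by
          rw [← lie_skew, hker_cent _ hz (E w), neg_zero]
        rw [h2, sub_zero] at h1
        exact h1.symm
      -- hence q (E z) is central in g, hence 0
      have : q (E z) ∈ LieAlgebra.center F g := by
        rw [LieModule.mem_maxTrivSubmodule]
        intro u
        obtain ⟨w, rfl⟩ := hqsurj u
        rw [← LieHom.map_lie, hEz, map_zero]
      rw [hcenterg] at this
      exact (LieSubmodule.mem_bot _).mp this
    -- choose a linear section of q
    obtain ⟨s, hs⟩ := (q : ghat →ₗ[F] g).exists_rightInverse_of_surjective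
      (LinearMap.range_eq_top.mpr hqsurj)
    have hs' : ∀ u : g, q (s u) = u := fun u =>
      congrFun (congrArg DFunLike.coe hs) u
    set D₀ : g →ₗ[F] g := (q : ghat →ₗ[F] g) ∘ₗ (E : ghat →ₗ[F] ghat) ∘ₗ s with hD₀def
    have hD₀ : ∀ x : ghat, D₀ (q x) = q (E x) := by
      intro x
      show q (E (s (q x))) = q (E x)
      have h1 : q (s (q x) - x) = 0 := by rw [map_sub, hs', sub_self]
      have := hEker _ h1
      rw [show E (s (q x) - x) = E (s (q x)) - E x from map_sub E.toLinearMap _ _,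
        map_sub q] at this
      exact sub_eq_zero.mp this
    set D : LieDerivation F g g :=
      { toLinearMap := D₀
        leibniz' := fun a b => by
          obtain ⟨x, rfl⟩ := hqsurj a
          obtain ⟨y, rfl⟩ := hqsurj b
          show D₀ ⁅q x, q y⁆ = ⁅q x, D₀ (q y)⁆ - ⁅q y, D₀ (q x)⁆
          rw [← LieHom.map_lie, hD₀, hD₀, hD₀, E.apply_lie_eq_sub, map_sub q,
            LieHom.map_lie, LieHom.map_lie] } with hDdef
    refine ⟨D, ?_⟩
    show Lift D = E
    exact (huniq D E fun x => (hD₀ x).symm).symm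
  refine ⟨LieEquiv.ofBijective Φ₀ ⟨hinj, hsurj⟩, fun D x => ?_⟩
  show q (Φ₀ D x) = D (q x)
  exact hlift D x
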